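/- arXiv:1501.02441 — 2 statements merged into one kernel-verified Lean document; each statement's English description precedes it below -/
import Mathlib

section
/- (Lemma 2, finite table.) Let P ⊂ ℝ² be an open parallelogram P = {t·u + s·v : 0 < t, s < 1} (u, v linearly independent) that contains at least one unit-length segment, let c : P → Fin k be measurable, let c̃ be the periodic extension of c to the plane (periodic with periods u and v, agreeing with c on P up to a null set), and let p^table(c) be the conditional probability that c(A) = c(B) given B ∈ P, where A is uniform in P, θ is uniform in [0, 2π) independent of A, and B = A + (cos θ, sin θ). Then |p^per(c̃) − p^table(c)| ≤ 2 · Area(K(P,1)) / Area(P), where K(P,1) = {z ∈ P : dist(z, ℝ² \ P) < 1} is the 1-wide inner border of P. -/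
open MeasureTheory Real

noncomputable section

abbrev Plane := EuclideanSpace ℝ (Fin 2)

def vec (x y : ℝ) : Plane := (WithLp.equiv 2 (Fin 2 → ℝ)).symm ![x, y]

def dir (θ : ℝ) : Plane := vec (Real.cos θ) (Real.sin θ)

/-- The fundamental parallelogram `{t•u + s•v : 0 ≤ t, s < 1}`. -/
def para (u v : Plane) : Set Plane :=
  {x | ∃ t s : ℝ, 0 ≤ t ∧ t < 1 ∧ 0 ≤ s ∧ s < 1 ∧ x = t • u + s • v}

/-- `p^per(c)` for a periodic coloring with fundamental parallelogram `para u v`. -/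
def pper {k : ℕ} (c : Plane → Fin k) (u v : Plane) : ℝ :=
  (1 / (2 * π * (volume (para u v)).toReal)) *
    ∫ a in para u v, ∫ θ in (0:ℝ)..(2*π),
      (if c a = c (a + dir θ) then (1:ℝ) else 0)

/-- The square `[-R, R]²`. -/
def square (R : ℝ) : Set Plane := {x | x 0 ∈ Set.Icc (-R) R ∧ x 1 ∈ Set.Icc (-R) R}

-- `p^table(c)` on the "table" `P`: the conditional probability that both endpoints of a
-- random needle have the same color, given that the second endpoint also lands in `P`.
open Classical in
def ptableSet {k : ℕ} (c : Plane → Fin k) (P : Set Plane) : ℝ :=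
  (∫ a in P, ∫ θ in (0:ℝ)..(2*π),
      (if c a = c (a + dir θ) ∧ a + dir θ ∈ P then (1:ℝ) else 0)) /
  (∫ a in P, ∫ θ in (0:ℝ)..(2*π), (if a + dir θ ∈ P then (1:ℝ) else 0))

/-- `p^table_R(c)`, on the square table `[-R, R]²`. -/
def ptable {k : ℕ} (c : Plane → Fin k) (R : ℝ) : ℝ := ptableSet c (square R)

/-- The open parallelogram `{t•u + s•v : 0 < t, s < 1}`. -/
def paraOpen (u v : Plane) : Set Plane :=
  {x | ∃ t s : ℝ, 0 < t ∧ t < 1 ∧ 0 < s ∧ s < 1 ∧ x = t • u + s • v}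

/-- `K(P, r)`: the `r`-wide inner border of `P`. -/
def innerBorder (P : Set Plane) (r : ℝ) : Set Plane :=
  {z ∈ P | Metric.infDist z Pᶜ < r}

lemma continuous_dir : Continuous dir := by
  have h : Continuous fun θ : ℝ => (![Real.cos θ, Real.sin θ] : Fin 2 → ℝ) := by
    apply continuous_pi; intro i
    fin_cases i <;> simp [Real.continuous_cos, Real.continuous_sin]
  exact (PiLp.continuous_toLp (p := 2) (β := fun _ : Fin 2 => ℝ)).comp h

lemma norm_dir (θ : ℝ) : ‖dir θ‖ = 1 := by
  have : ‖dir θ‖ ^ 2 = 1 := by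
    rw [EuclideanSpace.norm_eq, Real.sq_sqrt (by positivity)]
    simp [dir, vec, Fin.sum_univ_two]
  nlinarith [norm_nonneg (dir θ)]

section Para
variable {u v : Plane}

def basisUV (huv : LinearIndependent ℝ ![u, v]) : Module.Basis (Fin 2) ℝ Plane :=
  basisOfLinearIndependentOfCardEqFinrank huv (by simp)

lemma basisUV_zero (huv : LinearIndependent ℝ ![u, v]) : basisUV huv 0 = u := by
  rw [basisUV, coe_basisOfLinearIndependentOfCardEqFinrank]; rfl

lemma basisUV_one (huv : LinearIndependent ℝ ![u, v]) : basisUV huv 1 = v := by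
  rw [basisUV, coe_basisOfLinearIndependentOfCardEqFinrank]; rfl

lemma paraOpen_eq (huv : LinearIndependent ℝ ![u, v]) :
    paraOpen u v = (fun x => (basisUV huv).repr x 0) ⁻¹' Set.Ioo 0 1 ∩
      (fun x => (basisUV huv).repr x 1) ⁻¹' Set.Ioo 0 1 := by
  ext x
  set B := basisUV huv with hB
  constructor
  · rintro ⟨t, s, ht0, ht1, hs0, hs1, rfl⟩
    have : (B.repr (t • u + s • v)) = t • B.repr (B 0) + s • B.repr (B 1) := by
      rw [basisUV_zero huv, basisUV_one huv, map_add, _root_.map_smul, _root_.map_smul]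
    simp only [Set.mem_inter_iff, Set.mem_preimage, Set.mem_Ioo, this, B.repr_self]
    simp [Finsupp.single_apply, ht0, ht1, hs0, hs1]
  · rintro ⟨h0, h1⟩
    refine ⟨B.repr x 0, B.repr x 1, h0.1, h0.2, h1.1, h1.2, ?_⟩
    conv_lhs => rw [← B.sum_repr x]
    rw [Fin.sum_univ_two, basisUV_zero huv, basisUV_one huv]

lemma isOpen_paraOpen (huv : LinearIndependent ℝ ![u, v]) : IsOpen (paraOpen u v) := by
  rw [paraOpen_eq huv]
  have h0 : Continuous fun x : Plane => (basisUV huv).repr x 0 :=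
    LinearMap.continuous_of_finiteDimensional ((basisUV huv).coord 0)
  have h1 : Continuous fun x : Plane => (basisUV huv).repr x 1 :=
    LinearMap.continuous_of_finiteDimensional ((basisUV huv).coord 1)
  exact (isOpen_Ioo.preimage h0).inter (isOpen_Ioo.preimage h1)

lemma convex_paraOpen (huv : LinearIndependent ℝ ![u, v]) : Convex ℝ (paraOpen u v) := by
  rw [paraOpen_eq huv]
  exact ((convex_Ioo 0 1).linear_preimage ((basisUV huv).coord 0)).inter
    ((convex_Ioo 0 1).linear_preimage ((basisUV huv).coord 1))

end Para
lemma paraOpen_subset_ball (u v : Plane) : paraOpen u v ⊆ Metric.ball 0 (‖u‖ + ‖v‖ + 1) := by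
  rintro x ⟨t, s, ht0, ht1, hs0, hs1, rfl⟩
  rw [Metric.mem_ball, dist_zero_right]
  calc ‖t • u + s • v‖ ≤ ‖t • u‖ + ‖s • v‖ := norm_add_le _ _
    _ = |t| * ‖u‖ + |s| * ‖v‖ := by rw [norm_smul, norm_smul]; rfl
    _ ≤ 1 * ‖u‖ + 1 * ‖v‖ := by
        gcongr
        · rw [abs_of_pos ht0]; exact ht1.le
        · rw [abs_of_pos hs0]; exact hs1.le
    _ < ‖u‖ + ‖v‖ + 1 := by linarith
lemma volume_paraOpen_lt_top (u v : Plane) : volume (paraOpen u v) < ⊤ :=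
  lt_of_le_of_lt (measure_mono (paraOpen_subset_ball u v)) measure_ball_lt_top

lemma paraOpen_nonempty (u v : Plane) : (paraOpen u v).Nonempty :=
  ⟨(1/2 : ℝ) • u + (1/2 : ℝ) • v, 1/2, 1/2, by norm_num⟩

lemma volume_paraOpen_pos {u v : Plane} (huv : LinearIndependent ℝ ![u, v]) :
    0 < volume (paraOpen u v) :=
  (isOpen_paraOpen huv).measure_pos volume (paraOpen_nonempty u v)

lemma span_u_ne_top {u v : Plane} (huv : LinearIndependent ℝ ![u, v]) :
    Submodule.span ℝ {u} ≠ ⊤ := by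
  rw [linearIndependent_fin2] at huv
  simp only [Matrix.cons_val_one, Matrix.head_cons, Matrix.cons_val_zero] at huv
  intro h
  have hv : v ∈ Submodule.span ℝ {u} := h ▸ Submodule.mem_top
  obtain ⟨a, ha⟩ := Submodule.mem_span_singleton.1 hv
  rcases eq_or_ne a 0 with rfl | ha0
  · exact huv.1 (by simp [← ha])
  · exact huv.2 a⁻¹ (by rw [← ha, smul_smul, inv_mul_cancel₀ ha0, one_smul])

lemma span_v_ne_top {u v : Plane} (huv : LinearIndependent ℝ ![u, v]) :
    Submodule.span ℝ {v} ≠ ⊤ := by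
  rw [linearIndependent_fin2] at huv
  simp only [Matrix.cons_val_one, Matrix.head_cons, Matrix.cons_val_zero] at huv
  intro h
  have hu : u ∈ Submodule.span ℝ {v} := h ▸ Submodule.mem_top
  obtain ⟨a, ha⟩ := Submodule.mem_span_singleton.1 hu
  exact huv.2 a ha

lemma volume_para_diff {u v : Plane} (huv : LinearIndependent ℝ ![u, v]) :
    volume (para u v \ paraOpen u v) = 0 := by
  have hsub : para u v \ paraOpen u v ⊆
      (Submodule.span ℝ {u} : Set Plane) ∪ (Submodule.span ℝ {v} : Set Plane) := by
    rintro x ⟨⟨t, s, ht0, ht1, hs0, hs1, rfl⟩, hno⟩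
    rcases ht0.lt_or_eq with ht | ht
    · rcases hs0.lt_or_eq with hs | hs
      · exact absurd ⟨t, s, ht, ht1, hs, hs1, rfl⟩ hno
      · left; rw [← hs, zero_smul, add_zero]
        exact Submodule.smul_mem _ t (Submodule.mem_span_singleton_self u)
    · right; rw [← ht, zero_smul, zero_add]
      exact Submodule.smul_mem _ s (Submodule.mem_span_singleton_self v)
  refine measure_mono_null hsub (le_antisymm ?_ zero_le)
  rw [← add_zero (0 : ENNReal)]
  exact le_trans (measure_union_le _ _) (by
    rw [Measure.addHaar_submodule volume _ (span_u_ne_top huv),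
      Measure.addHaar_submodule volume _ (span_v_ne_top huv)])

lemma para_ae_eq {u v : Plane} (huv : LinearIndependent ℝ ![u, v]) :
    para u v =ᵐ[volume] paraOpen u v := by
  rw [MeasureTheory.ae_eq_set]
  refine ⟨volume_para_diff huv, ?_⟩
  have h2 : paraOpen u v \ para u v = ∅ := by
    rw [Set.diff_eq_empty]
    rintro x ⟨t, s, ht0, ht1, hs0, hs1, rfl⟩
    exact ⟨t, s, ht0.le, ht1, hs0.le, hs1, rfl⟩
  rw [h2]; simp

lemma frontier_paraOpen_null {u v : Plane} (huv : LinearIndependent ℝ ![u, v]) :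
    volume (frontier (paraOpen u v)) = 0 :=
  (convex_paraOpen huv).addHaar_frontier volume
lemma measurableSet_eq_fin {α : Type*} [MeasurableSpace α] {k : ℕ} {f g : α → Fin k}
    (hf : Measurable f) (hg : Measurable g) : MeasurableSet {x | f x = g x} := by
  have : {x | f x = g x} = ⋃ i : Fin k, f ⁻¹' {i} ∩ g ⁻¹' {i} := by
    ext x; simp only [Set.mem_setOf_eq, Set.mem_iUnion, Set.mem_inter_iff, Set.mem_preimage,
      Set.mem_singleton_iff]
    exact ⟨fun h => ⟨f x, rfl, h.symm⟩, fun ⟨i, h1, h2⟩ => h1.trans h2.symm⟩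
  rw [this]
  exact MeasurableSet.iUnion fun i => (hf (measurableSet_singleton i)).inter
    (hg (measurableSet_singleton i))

lemma ae_ae_translate {P : Set Plane} {S : Set Plane} (hS : volume S = 0) :
    ∀ᵐ a ∂(volume.restrict P), ∀ᵐ θ ∂(volume.restrict (Set.Ioc 0 (2*π))),
      a + dir θ ∉ S := by
  obtain ⟨S', hSS', hS'm, hS'0⟩ := exists_measurable_superset_of_null hS
  set μ := volume.restrict P with hμ
  set ν := volume.restrict (Set.Ioc (0:ℝ) (2*π)) with hν
  have hmap : Measurable fun q : Plane × ℝ => q.1 + dir q.2 :=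
    measurable_fst.add (continuous_dir.measurable.comp measurable_snd)
  have hmap' : Measurable fun q : ℝ × Plane => q.2 + dir q.1 :=
    measurable_snd.add (continuous_dir.measurable.comp measurable_fst)
  have hT : MeasurableSet {q : Plane × ℝ | q.1 + dir q.2 ∈ S'} := hmap hS'm
  have hT' : MeasurableSet {q : ℝ × Plane | q.2 + dir q.1 ∈ S'} := hmap' hS'm
  have key : μ.prod ν {q : Plane × ℝ | q.1 + dir q.2 ∈ S'} = 0 := by
    have hswap : μ.prod ν {q : Plane × ℝ | q.1 + dir q.2 ∈ S'} =
        ν.prod μ {q : ℝ × Plane | q.2 + dir q.1 ∈ S'} := by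
      rw [← Measure.prod_swap, Measure.map_apply measurable_swap hT]
      rfl
    rw [hswap, Measure.measure_prod_null hT']
    refine Filter.Eventually.of_forall fun θ => ?_
    have hA : (Prod.mk θ ⁻¹' {q : ℝ × Plane | q.2 + dir q.1 ∈ S'}) =
        (fun a : Plane => a + dir θ) ⁻¹' S' := rfl
    show μ (Prod.mk θ ⁻¹' {q : ℝ × Plane | q.2 + dir q.1 ∈ S'}) = (0 : ℝ → ENNReal) θ
    rw [hA]
    show _ = (0 : ENNReal)
    refine le_antisymm ?_ zero_le
    calc μ ((fun a : Plane => a + dir θ) ⁻¹' S')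
        ≤ volume ((fun a : Plane => a + dir θ) ⁻¹' S') :=
          Measure.le_iff'.1 Measure.restrict_le_self _
      _ = volume S' := by rw [measure_preimage_add_right]
      _ = 0 := hS'0
  rw [Measure.measure_prod_null hT] at key
  filter_upwards [key] with a ha
  have ha' : ν {θ : ℝ | a + dir θ ∈ S'} = 0 := ha
  have : ∀ᵐ θ ∂ν, a + dir θ ∉ S' := by
    rw [ae_iff]
    simpa using ha'
  filter_upwards [this] with θ hθ hmem
  exact hθ (hSS' hmem)
namespace Stmt15
open Classical

def II : Set ℝ := Set.Ioc 0 (2*π)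

lemma volume_II : (volume II).toReal = 2*π := by
  rw [II, Real.volume_Ioc, sub_zero, ENNReal.toReal_ofReal (by positivity)]

lemma volume_II_lt_top : volume II < ⊤ := by
  rw [II, Real.volume_Ioc]; exact ENNReal.ofReal_lt_top

instance : IsFiniteMeasure (volume.restrict II) :=
  ⟨by rw [Measure.restrict_apply_univ]; exact volume_II_lt_top⟩

lemma measurableSet_II : MeasurableSet II := measurableSet_Ioc

lemma integrableOn_ite_II {p : ℝ → Prop} (hp : MeasurableSet {θ | p θ}) :
    IntegrableOn (fun θ => if p θ then (1:ℝ) else 0) II := by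
  refine Measure.integrableOn_of_bounded (M := 1) volume_II_lt_top.ne ?_ ?_
  · exact (Measurable.ite hp measurable_const measurable_const).aestronglyMeasurable
  · refine Filter.Eventually.of_forall fun θ => ?_
    by_cases h : p θ <;> simp [h]

lemma intII_nonneg (f : ℝ → ℝ) (hf : ∀ θ, 0 ≤ f θ) : 0 ≤ ∫ θ in II, f θ :=
  setIntegral_nonneg measurableSet_Ioc fun θ _ => hf θ

lemma intII_le_two_pi (f : ℝ → ℝ) (hf : ∀ θ, ‖f θ‖ ≤ 1) : ∫ θ in II, f θ ≤ 2*π := by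
  have h := norm_integral_le_of_norm_le_const (μ := volume.restrict II) (f := f) (C := 1)
    (Filter.Eventually.of_forall hf)
  rw [measureReal_def, Measure.restrict_apply_univ, volume_II, one_mul] at h
  exact le_trans (le_abs_self _) h

lemma intII_const : ∫ _ in II, (1:ℝ) = 2*π := by
  rw [setIntegral_const, measureReal_def, volume_II, smul_eq_mul, mul_one]

end Stmt15
lemma vec_zero (x y : ℝ) : vec x y 0 = x := rfl
lemma vec_one (x y : ℝ) : vec x y 1 = y := rfl

lemma exists_dir {d : Plane} (hd : ‖d‖ = 1) : ∃ θ₀ : ℝ, 0 < θ₀ ∧ θ₀ ≤ 2*π ∧ dir θ₀ = d := by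
  have hπ := Real.pi_pos
  set z : ℂ := ⟨d 0, d 1⟩ with hz
  have hnorm : Real.sqrt (d 0 ^ 2 + d 1 ^ 2) = 1 := by
    rw [EuclideanSpace.norm_eq] at hd
    simpa [Fin.sum_univ_two, sq_abs] using hd
  have habs : ‖z‖ = 1 := by
    rw [Complex.norm_def, Complex.normSq_mk]
    rw [show d 0 * d 0 + d 1 * d 1 = d 0 ^ 2 + d 1 ^ 2 by ring]
    exact hnorm
  have hz0 : z ≠ 0 := by
    intro h'; rw [h'] at habs; simp at habs
  have hcos : Real.cos z.arg = d 0 := by rw [Complex.cos_arg hz0, habs]; simp [hz]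
  have hsin : Real.sin z.arg = d 1 := by rw [Complex.sin_arg, habs]; simp [hz]
  have hdir : dir z.arg = d := by
    ext i
    fin_cases i
    · exact (show dir z.arg 0 = d 0 by rw [dir, vec_zero, hcos])
    · exact (show dir z.arg 1 = d 1 by rw [dir, vec_one, hsin])
  rcases lt_or_ge 0 z.arg with h | h
  · exact ⟨z.arg, h, by linarith [Complex.arg_le_pi z], hdir⟩
  · refine ⟨z.arg + 2*π, by linarith [Complex.neg_pi_lt_arg z], by linarith, ?_⟩
    rw [show dir (z.arg + 2*π) = dir z.arg by
      rw [dir, dir, Real.cos_add_two_pi, Real.sin_add_two_pi], hdir]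
lemma final_arith (A κ N1 N2 D : ℝ) (hA : 0 < A) (hD : 0 < D)
    (hN2 : 0 ≤ N2) (hN2D : N2 ≤ D) (hDle : D ≤ 2*π*A)
    (hdiff : |N1 - N2| ≤ 2*π*κ) (hgap : 2*π*A - D ≤ 2*π*κ) :
    |1/(2*π*A) * N1 - N2/D| ≤ 2*κ/A := by
  have hπ := Real.pi_pos
  have h2A : 0 < 2*π*A := by positivity
  have hκ : 0 ≤ κ := by nlinarith [le_trans (abs_nonneg (N1 - N2)) hdiff]
  have e : 1/(2*π*A) * N1 - N2/D =
      (N1 - N2)/(2*π*A) + (N2*(D - 2*π*A))/((2*π*A)*D) := by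
    field_simp; ring
  rw [e]
  have t1 : |(N1 - N2)/(2*π*A)| ≤ κ/A := by
    rw [abs_div, abs_of_pos h2A, div_le_div_iff₀ h2A hA]
    calc |N1 - N2| * A ≤ (2*π*κ)*A := by nlinarith
      _ = κ*(2*π*A) := by ring
  have t2 : |N2*(D - 2*π*A)/((2*π*A)*D)| ≤ κ/A := by
    have hprod : (0:ℝ) < (2*π*A)*D := by positivity
    rw [abs_div, abs_of_pos hprod, div_le_div_iff₀ hprod hA]
    have habs : |N2*(D - 2*π*A)| = N2*(2*π*A - D) := by
      rw [abs_mul, abs_of_nonneg hN2, abs_of_nonpos (by linarith)]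
      ring
    rw [habs]
    have h0 : (0:ℝ) ≤ 2*π*A - D := by linarith
    calc N2*(2*π*A - D)*A ≤ D*(2*π*A - D)*A :=
          mul_le_mul_of_nonneg_right (mul_le_mul_of_nonneg_right hN2D h0) hA.le
      _ ≤ D*(2*π*κ)*A :=
          mul_le_mul_of_nonneg_right (mul_le_mul_of_nonneg_left hgap hD.le) hA.le
      _ = κ*((2*π*A)*D) := by ring
  calc |(N1 - N2)/(2*π*A) + N2*(D - 2*π*A)/((2*π*A)*D)|
      ≤ |(N1 - N2)/(2*π*A)| + |N2*(D - 2*π*A)/((2*π*A)*D)| := abs_add_le _ _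
    _ ≤ κ/A + κ/A := add_le_add t1 t2
    _ = 2*κ/A := by ring

open Stmt15 in
set_option maxHeartbeats 1000000 in
/-- Lemma 2 (finite table): if the open parallelogram `P = paraOpen u v` contains a unit
segment, `c` is a `k`-coloring of `P`, and `c̃` is its periodic extension (periodic with
periods `u, v` and agreeing a.e. with `c` on `P`), then
`|p^per(c̃) − p^table(c)| ≤ 2·Area(K(P,1))/Area(P)`. -/
theorem stmt15 (k : ℕ) (u v : Plane) (huv : LinearIndependent ℝ ![u, v])
    (hseg : ∃ a b : Plane, a ∈ paraOpen u v ∧ b ∈ paraOpen u v ∧ dist a b = 1)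
    (c ctilde : Plane → Fin k) (hc : Measurable c) (hct : Measurable ctilde)
    (hper : ∀ x : Plane, ctilde (x + u) = ctilde x ∧ ctilde (x + v) = ctilde x)
    (hagree : ∀ᵐ x ∂(volume.restrict (paraOpen u v)), ctilde x = c x) :
    |pper ctilde u v - ptableSet c (paraOpen u v)| ≤
      2 * (volume (innerBorder (paraOpen u v) 1)).toReal /
        (volume (paraOpen u v)).toReal := by
  classical
  have hπ := Real.pi_pos
  have h2π : (0:ℝ) ≤ 2*π := by positivity
  set P := paraOpen u v with hPdef
  have hPopen : IsOpen P := isOpen_paraOpen huv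
  have hPm : MeasurableSet P := hPopen.measurableSet
  have hPfin : volume P < ⊤ := volume_paraOpen_lt_top u v
  set A := (volume P).toReal with hAdef
  have hApos : 0 < A := ENNReal.toReal_pos (volume_paraOpen_pos huv).ne' hPfin.ne
  set K := innerBorder P 1 with hKdef
  have hKP : K ⊆ P := fun z hz => hz.1
  have hKm : MeasurableSet K :=
    hPm.inter ((isOpen_lt (Metric.continuous_infDist_pt _) continuous_const).measurableSet)
  set κ := (volume K).toReal with hκdef
  -- measurability of the integrands
  have hmapm : Measurable fun q : Plane × ℝ => q.1 + dir q.2 :=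
    measurable_fst.add (continuous_dir.measurable.comp measurable_snd)
  set F1 : Plane × ℝ → ℝ := fun q => if ctilde q.1 = ctilde (q.1 + dir q.2) then 1 else 0
    with hF1def
  set F2 : Plane × ℝ → ℝ :=
    fun q => if c q.1 = c (q.1 + dir q.2) ∧ q.1 + dir q.2 ∈ P then 1 else 0 with hF2def
  set F3 : Plane × ℝ → ℝ := fun q => if q.1 + dir q.2 ∈ P then 1 else 0 with hF3def
  have hF1m : Measurable F1 :=
    Measurable.ite (measurableSet_eq_fin (hct.comp measurable_fst) (hct.comp hmapm))
      measurable_const measurable_const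
  have hF2m : Measurable F2 :=
    Measurable.ite ((measurableSet_eq_fin (hc.comp measurable_fst) (hc.comp hmapm)).inter
      (hmapm hPm)) measurable_const measurable_const
  have hF3m : Measurable F3 :=
    Measurable.ite (hmapm hPm) measurable_const measurable_const
  -- the inner integrals
  set g : Plane → ℝ := fun a => ∫ θ in II, F1 (a, θ) with hgdef
  set h : Plane → ℝ := fun a => ∫ θ in II, F2 (a, θ) with hhdef
  set w : Plane → ℝ := fun a => ∫ θ in II, F3 (a, θ) with hwdef
  have hgm : Measurable g := (hF1m.stronglyMeasurable.integral_prod_right').measurable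
  have hhm : Measurable h := (hF2m.stronglyMeasurable.integral_prod_right').measurable
  have hwm : Measurable w := (hF3m.stronglyMeasurable.integral_prod_right').measurable
  have hnn : ∀ (F : Plane × ℝ → ℝ), (∀ q, F q = 0 ∨ F q = 1) →
      ∀ a, 0 ≤ (∫ θ in II, F (a, θ)) ∧ (∫ θ in II, F (a, θ)) ≤ 2*π := by
    intro F hF a
    constructor
    · exact intII_nonneg _ fun θ => by rcases hF (a, θ) with h' | h' <;> rw [h'] <;> norm_num
    · exact intII_le_two_pi _ fun θ => by
        rcases hF (a, θ) with h' | h' <;> rw [h'] <;> norm_num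
  have hF1v : ∀ q, F1 q = 0 ∨ F1 q = 1 := fun q => by
    rw [hF1def]; dsimp only; split <;> simp
  have hF2v : ∀ q, F2 q = 0 ∨ F2 q = 1 := fun q => by
    rw [hF2def]; dsimp only; split <;> simp
  have hF3v : ∀ q, F3 q = 0 ∨ F3 q = 1 := fun q => by
    rw [hF3def]; dsimp only; split <;> simp
  have hg01 := hnn F1 hF1v
  have hh01 := hnn F2 hF2v
  have hw01 := hnn F3 hF3v
  -- integrability on P
  have hInt : ∀ (G : Plane → ℝ), Measurable G → (∀ a, 0 ≤ G a ∧ G a ≤ 2*π) →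
      IntegrableOn G P := by
    intro G hGm hGb
    refine Measure.integrableOn_of_bounded (M := 2*π) hPfin.ne hGm.aestronglyMeasurable ?_
    refine Filter.Eventually.of_forall fun a => ?_
    rw [Real.norm_eq_abs, abs_of_nonneg (hGb a).1]
    exact (hGb a).2
  have hgInt : IntegrableOn g P := hInt g hgm hg01
  have hhInt : IntegrableOn h P := hInt h hhm hh01
  have hwInt : IntegrableOn w P := hInt w hwm hw01
  set N1 := ∫ a in P, g a with hN1def
  set N2 := ∫ a in P, h a with hN2def
  set D := ∫ a in P, w a with hDdef
  -- rewriting the goal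
  have hIoc : ∀ f : ℝ → ℝ, ∫ θ in (0:ℝ)..(2*π), f θ = ∫ θ in II, f θ := fun f =>
    intervalIntegral.integral_of_le h2π
  have hpper : pper ctilde u v = 1/(2*π*A) * N1 := by
    rw [pper, measure_congr (para_ae_eq huv), setIntegral_congr_set (para_ae_eq huv)]
    rw [← hPdef, ← hAdef]
    congr 1
    refine setIntegral_congr_fun hPm fun a _ => ?_
    rw [hIoc]
  have hptable : ptableSet c P = N2/D := by
    rw [ptableSet]
    congr 1
    · refine setIntegral_congr_fun hPm fun a _ => ?_
      rw [hIoc]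
    · refine setIntegral_congr_fun hPm fun a _ => ?_
      rw [hIoc]
  -- pointwise facts off the border
  have hE0 : volume {x | x ∈ P ∧ ctilde x ≠ c x} = 0 := by
    have h1 := (ae_restrict_iff' hPm).mp hagree
    rw [ae_iff] at h1
    have : {x | ¬(x ∈ P → ctilde x = c x)} = {x | x ∈ P ∧ ctilde x ≠ c x} := by
      ext x; push_neg; rfl
    rwa [this] at h1
  have hS0 : volume ({x | x ∈ P ∧ ctilde x ≠ c x} ∪ frontier P) = 0 :=
    measure_union_null hE0 (frontier_paraOpen_null huv)
  have htrans := ae_ae_translate (P := P) hS0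
  have hae : ∀ᵐ a ∂(volume.restrict P), a ∉ K → g a = h a ∧ w a = 2*π := by
    filter_upwards [htrans, hagree, ae_restrict_mem hPm] with a hta haa hap hnotK
    have hball : ∀ y, dist y a < 1 → y ∈ P := by
      intro y hy
      by_contra hyP
      refine hnotK ⟨hap, lt_of_le_of_lt (Metric.infDist_le_dist_of_mem hyP) ?_⟩
      rwa [dist_comm]
    have hcirc : ∀ᵐ θ ∂(volume.restrict II),
        a + dir θ ∈ P ∧ ctilde (a + dir θ) = c (a + dir θ) := by
      filter_upwards [hta] with θ hθ
      have hcl : a + dir θ ∈ closure P := by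
        have h1 : a + dir θ ∈ Metric.closedBall a 1 := by
          rw [Metric.mem_closedBall, dist_eq_norm, add_sub_cancel_left, norm_dir]
        rw [← closure_ball a one_ne_zero] at h1
        exact closure_mono (fun y hy => hball y (Metric.mem_ball.mp hy)) h1
      have hnf : a + dir θ ∉ frontier P := fun hf => hθ (Or.inr hf)
      have hmemP : a + dir θ ∈ P := by
        by_contra hmem
        refine hnf ⟨hcl, ?_⟩
        rwa [hPopen.interior_eq]
      refine ⟨hmemP, ?_⟩
      by_contra hne
      exact hθ (Or.inl ⟨hmemP, hne⟩)
    constructor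
    · refine integral_congr_ae ?_
      filter_upwards [hcirc] with θ hθ
      obtain ⟨hmemP, heq⟩ := hθ
      rw [hF1def, hF2def]; dsimp only
      rw [haa, heq]
      by_cases hcc : c a = c (a + dir θ) <;> simp [hcc, hmemP]
    · have h1 : ∀ᵐ θ ∂(volume.restrict II), F3 (a, θ) = (fun _ : ℝ => (1:ℝ)) θ := by
        filter_upwards [hcirc] with θ hθ
        rw [hF3def]; dsimp only
        rw [if_pos hθ.1]
      calc w a = ∫ _ in II, (1:ℝ) := integral_congr_ae h1
        _ = 2*π := intII_const
  -- main estimates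
  have hN2nn : 0 ≤ N2 := setIntegral_nonneg hPm fun a _ => (hh01 a).1
  have hIntF : ∀ (F : Plane × ℝ → ℝ), Measurable F → (∀ q, F q = 0 ∨ F q = 1) →
      ∀ a, IntegrableOn (fun θ => F (a, θ)) II := by
    intro F hF hv a
    refine Measure.integrableOn_of_bounded (M := 1) volume_II_lt_top.ne
      ((hF.comp (measurable_const.prodMk measurable_id)).aestronglyMeasurable) ?_
    exact Filter.Eventually.of_forall fun θ => by
      rcases hv (a, θ) with h' | h' <;> rw [h'] <;> norm_num
  have hptw : ∀ a, h a ≤ w a := by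
    intro a
    refine setIntegral_mono_on (hIntF F2 hF2m hF2v a) (hIntF F3 hF3m hF3v a)
      measurableSet_II fun θ _ => ?_
    rw [hF2def, hF3def]; dsimp only
    split
    · rename_i h'; rw [if_pos h'.2]
    · split <;> norm_num
  have hN2D : N2 ≤ D := setIntegral_mono_on hhInt hwInt hPm fun a _ => hptw a
  have hDle : D ≤ 2*π*A := by
    calc D ≤ ∫ _ in P, 2*π := setIntegral_mono_on hwInt
          (integrableOn_const hPfin.ne) hPm fun a _ => (hw01 a).2
      _ = A * (2*π) := by rw [setIntegral_const, smul_eq_mul, measureReal_def]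
      _ = 2*π*A := by ring
  have hφInt : IntegrableOn (fun a => 2*π * K.indicator (fun _ => (1:ℝ)) a) P := by
    refine Integrable.const_mul ?_ _
    exact (integrableOn_const hPfin.ne).indicator hKm
  have hφint : ∫ a in P, 2*π * K.indicator (fun _ => (1:ℝ)) a = 2*π*κ := by
    rw [integral_const_mul, setIntegral_indicator hKm,
      Set.inter_eq_self_of_subset_right hKP, setIntegral_const, smul_eq_mul, mul_one, measureReal_def]
  have hdiff : |N1 - N2| ≤ 2*π*κ := by
    have habs : ∀ᵐ a ∂(volume.restrict P),
        |g a - h a| ≤ 2*π * K.indicator (fun _ => (1:ℝ)) a := by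
      filter_upwards [hae] with a ha
      by_cases hK : a ∈ K
      · rw [Set.indicator_of_mem hK, mul_one, abs_le]
        constructor
        · linarith [(hg01 a).1, (hh01 a).2]
        · linarith [(hg01 a).2, (hh01 a).1]
      · rw [Set.indicator_of_notMem hK, mul_zero, (ha hK).1, sub_self, abs_zero]
    have e1 : N1 - N2 = ∫ a in P, (g a - h a) := (integral_sub hgInt hhInt).symm
    rw [e1]
    calc |∫ a in P, (g a - h a)| ≤ ∫ a in P, |g a - h a| := by
          simpa [Real.norm_eq_abs] using
            norm_integral_le_integral_norm (μ := volume.restrict P) (fun a => g a - h a)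
      _ ≤ ∫ a in P, 2*π * K.indicator (fun _ => (1:ℝ)) a :=
          integral_mono_ae (hgInt.sub hhInt).abs hφInt habs
      _ = 2*π*κ := hφint
  have hgap : 2*π*A - D ≤ 2*π*κ := by
    have hcInt : IntegrableOn (fun _ : Plane => 2*π) P := integrableOn_const hPfin.ne
    have e1 : 2*π*A - D = ∫ a in P, (2*π - w a) := by
      rw [integral_sub hcInt hwInt, setIntegral_const, smul_eq_mul, measureReal_def, ← hAdef, ← hDdef]
      ring_nf
    rw [e1]
    have habs : ∀ᵐ a ∂(volume.restrict P),
        2*π - w a ≤ 2*π * K.indicator (fun _ => (1:ℝ)) a := by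
      filter_upwards [hae] with a ha
      by_cases hK : a ∈ K
      · rw [Set.indicator_of_mem hK, mul_one]
        linarith [(hw01 a).1]
      · rw [Set.indicator_of_notMem hK, mul_zero, (ha hK).2, sub_self]
    calc ∫ a in P, (2*π - w a) ≤ ∫ a in P, 2*π * K.indicator (fun _ => (1:ℝ)) a :=
          integral_mono_ae (hcInt.sub hwInt) hφInt habs
      _ = 2*π*κ := hφint
  have hDpos : 0 < D := by
    obtain ⟨a₀, b₀, ha₀, hb₀, hdist⟩ := hseg
    have hnd : ‖b₀ - a₀‖ = 1 := by
      rw [← dist_eq_norm, dist_comm]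
      exact hdist
    obtain ⟨θ₀, hθ₀pos, hθ₀le, hθ₀d⟩ := exists_dir hnd
    have hb0eq : b₀ = a₀ + dir θ₀ := by rw [hθ₀d]; abel
    obtain ⟨ε, hε, hballb⟩ := Metric.isOpen_iff.mp hPopen b₀ hb₀
    obtain ⟨ρ, hρ, hballa⟩ := Metric.isOpen_iff.mp hPopen a₀ ha₀
    obtain ⟨δ, hδ, hδ'⟩ := Metric.continuousAt_iff.mp continuous_dir.continuousAt (ε/2)
      (by positivity)
    set δ' := min δ θ₀ / 2 with hδ'def
    have hδ'pos : 0 < δ' := by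
      rw [hδ'def]; have := lt_min hδ hθ₀pos; positivity
    have hδ'δ : δ' < δ := by
      rw [hδ'def]; have h1 := min_le_left δ θ₀; linarith [lt_min hδ hθ₀pos]
    have hδ'θ : δ' < θ₀ := by
      rw [hδ'def]; have h1 := min_le_right δ θ₀; linarith [lt_min hδ hθ₀pos]
    set J := Set.Ioc (θ₀ - δ') θ₀ with hJdef
    have hJI : J ⊆ II := Set.Ioc_subset_Ioc (by linarith) hθ₀le
    set r := min ρ (ε/2) with hrdef
    have hrpos : 0 < r := lt_min hρ (by positivity)
    have hkey : ∀ a ∈ Metric.ball a₀ r, ∀ θ ∈ J, a + dir θ ∈ P := by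
      intro a haball θ hθJ
      apply hballb
      rw [Metric.mem_ball]
      have h1 : dist θ θ₀ < δ := by
        rw [Real.dist_eq, abs_lt]
        obtain ⟨h2, h3⟩ := hθJ
        constructor <;> linarith
      have h2 : dist (dir θ) (dir θ₀) < ε/2 := hδ' h1
      have h3 : dist a a₀ < ε/2 := lt_of_lt_of_le (Metric.mem_ball.mp haball)
        (min_le_right _ _)
      calc dist (a + dir θ) b₀ = ‖(a - a₀) + (dir θ - dir θ₀)‖ := by
            rw [dist_eq_norm, hb0eq]; congr 1; abel
        _ ≤ ‖a - a₀‖ + ‖dir θ - dir θ₀‖ := norm_add_le _ _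
        _ < ε/2 + ε/2 := by
            rw [← dist_eq_norm, ← dist_eq_norm]
            exact add_lt_add h3 h2
        _ = ε := by ring
    have hwlow : ∀ a ∈ Metric.ball a₀ r, δ' ≤ w a := by
      intro a ha
      have hJeq : ∫ θ in J, F3 (a, θ) = δ' := by
        rw [setIntegral_congr_fun measurableSet_Ioc
          (fun θ hθ => show F3 (a, θ) = (fun _ : ℝ => (1:ℝ)) θ by
            rw [hF3def]; dsimp only; rw [if_pos (hkey a ha θ hθ)])]
        rw [setIntegral_const, measureReal_def, Real.volume_Ioc, smul_eq_mul, mul_one,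
          ENNReal.toReal_ofReal (by linarith)]
        ring
      calc δ' = ∫ θ in J, F3 (a, θ) := hJeq.symm
        _ ≤ ∫ θ in II, F3 (a, θ) := by
            refine setIntegral_mono_set (hIntF F3 hF3m hF3v a) ?_
              (HasSubset.Subset.eventuallyLE hJI)
            refine Filter.Eventually.of_forall fun θ => ?_
            show (0:ℝ) ≤ F3 (a, θ)
            rcases hF3v (a, θ) with h' | h' <;> rw [h'] <;> norm_num
    have hball_sub : Metric.ball a₀ r ⊆ P := fun x hx =>
      hballa (Metric.ball_subset_ball (min_le_left _ _) hx)
    have hballvol : 0 < (volume (Metric.ball a₀ r)).toReal :=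
      ENNReal.toReal_pos (Metric.measure_ball_pos volume a₀ hrpos).ne'
        measure_ball_lt_top.ne
    calc (0:ℝ) < (volume (Metric.ball a₀ r)).toReal * δ' := by positivity
      _ = ∫ _ in Metric.ball a₀ r, δ' := by rw [setIntegral_const, smul_eq_mul, measureReal_def]
      _ ≤ ∫ a in Metric.ball a₀ r, w a :=
          setIntegral_mono_on (integrableOn_const measure_ball_lt_top.ne)
            (hwInt.mono_set hball_sub) Metric.isOpen_ball.measurableSet
            (fun a ha => hwlow a ha)
      _ ≤ D := by
          refine setIntegral_mono_set hwInt ?_ (HasSubset.Subset.eventuallyLE hball_sub)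
          exact Filter.Eventually.of_forall fun a => (hw01 a).1

  rw [hpper, hptable]
  have := final_arith A κ N1 N2 D hApos hDpos hN2nn hN2D hDle hdiff hgap
  calc |1/(2*π*A) * N1 - N2/D| ≤ 2*κ/A := this
    _ = 2 * κ / A := by ring

end
end

section
/- Let P ⊂ ℝ² be an open parallelogram containing at least one unit-length segment and let c : P → Fin 2 be measurable. Then p^table(c) ≥ 1/3 − 2 · Area(K(P,1)) / Area(P), where K(P,1) = {z ∈ P : dist(z, ℝ² \ P) < 1}. -/
open MeasureTheory Real

noncomputable section

namespace St16


lemma vec_add (a b c d : ℝ) : vec a b + vec c d = vec (a + c) (b + d) := by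
  ext i
  fin_cases i <;> simp [vec]

lemma smul_vec (r a b : ℝ) : r • vec a b = vec (r * a) (r * b) := by
  ext i
  fin_cases i <;> simp [vec]

lemma vec_sub (a b c d : ℝ) : vec a b - vec c d = vec (a - c) (b - d) := by
  ext i
  fin_cases i <;> simp [vec]

lemma norm_vec (x y : ℝ) : ‖vec x y‖ = Real.sqrt (x ^ 2 + y ^ 2) := by
  rw [EuclideanSpace.norm_eq]
  simp [vec, Fin.sum_univ_two, sq_abs]

lemma norm_dir (θ : ℝ) : ‖dir θ‖ = 1 := by
  rw [dir, norm_vec]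
  rw [show Real.cos θ ^ 2 + Real.sin θ ^ 2 = 1 by
    have := Real.sin_sq_add_cos_sq θ; linarith]
  exact Real.sqrt_one

lemma continuous_dir : Continuous dir := by
  have h : Continuous fun θ : ℝ => ![Real.cos θ, Real.sin θ] := by
    refine continuous_pi fun i => ?_
    fin_cases i <;> simp [Real.continuous_cos, Real.continuous_sin]
  exact ((PiLp.continuousLinearEquiv 2 ℝ (fun _ : Fin 2 => ℝ)).symm).continuous.comp h

lemma periodic_dir : Function.Periodic dir (2 * π) := by
  intro θ
  simp [dir, Real.cos_add_two_pi, Real.sin_add_two_pi]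

lemma cos_two_pi_div_three : Real.cos (2 * π / 3) = -(1 / 2) := by
  rw [show (2 * π / 3) = π - π / 3 by ring, Real.cos_pi_sub, Real.cos_pi_div_three]

lemma sin_two_pi_div_three : Real.sin (2 * π / 3) = Real.sqrt 3 / 2 := by
  rw [show (2 * π / 3) = π - π / 3 by ring, Real.sin_pi_sub, Real.sin_pi_div_three]

/-- `dir θ + dir (θ + 2π/3) = dir (θ + π/3)` -/
lemma dir_add_dir (θ : ℝ) : dir θ + dir (θ + 2 * π / 3) = dir (θ + π / 3) := by
  have hcos : Real.cos θ + Real.cos (θ + 2 * π / 3) = Real.cos (θ + π / 3) := by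
    rw [Real.cos_add θ (2 * π / 3), Real.cos_add θ (π / 3), cos_two_pi_div_three,
      sin_two_pi_div_three, Real.cos_pi_div_three, Real.sin_pi_div_three]
    ring
  have hsin : Real.sin θ + Real.sin (θ + 2 * π / 3) = Real.sin (θ + π / 3) := by
    rw [Real.sin_add θ (2 * π / 3), Real.sin_add θ (π / 3), cos_two_pi_div_three,
      sin_two_pi_div_three, Real.cos_pi_div_three, Real.sin_pi_div_three]
    ring
  rw [dir, dir, dir, vec_add, hcos, hsin]

lemma dist_third_vertex (a : Plane) (θ : ℝ) :
    dist (a + dir (θ + π / 3)) (a + (1 / 2 : ℝ) • dir θ) < 1 := by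
  rw [dist_eq_norm]
  have h : a + dir (θ + π / 3) - (a + (1 / 2 : ℝ) • dir θ)
      = dir (θ + π / 3) - (1 / 2 : ℝ) • dir θ := by abel
  rw [h, dir, dir, smul_vec, vec_sub, norm_vec]
  have hid : (Real.cos (θ + π / 3) - 1 / 2 * Real.cos θ) ^ 2 +
      (Real.sin (θ + π / 3) - 1 / 2 * Real.sin θ) ^ 2 = 3 / 4 := by
    have h1 := Real.sin_sq_add_cos_sq θ
    have h2 := Real.sin_sq_add_cos_sq (θ + π / 3)
    have h3 : Real.cos (θ + π / 3) * Real.cos θ + Real.sin (θ + π / 3) * Real.sin θ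
        = 1 / 2 := by
      rw [← Real.cos_sub (θ + π / 3) θ]
      rw [show θ + π / 3 - θ = π / 3 by ring, Real.cos_pi_div_three]
    nlinarith
  rw [hid]
  rw [show (1 : ℝ) = Real.sqrt 1 by simp]
  exact Real.sqrt_lt_sqrt (by norm_num) (by norm_num)

lemma dist_dir (a : Plane) (θ : ℝ) : dist (a + dir θ) a = 1 := by
  rw [show dist (a + dir θ) a = ‖a + dir θ - a‖ from dist_eq_norm _ _, add_sub_cancel_left,
    norm_dir]

/-- Concavity of infDist to the complement, on a convex set. -/
lemma infDist_combo {P : Set Plane} (hPc : Convex ℝ P) {a b : Plane} {p q r : ℝ}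
    (hp : 0 ≤ p) (hq : 0 ≤ q) (hpq : p + q = 1) (hr : 0 ≤ r)
    (hra : r ≤ Metric.infDist a Pᶜ) (hrb : r ≤ Metric.infDist b Pᶜ) :
    r ≤ Metric.infDist (p • a + q • b) Pᶜ := by
  rcases Set.eq_empty_or_nonempty Pᶜ with h | h
  · simpa [h, Metric.infDist_empty] using hra
  · by_contra hlt
    push_neg at hlt
    obtain ⟨w, hw, hdw⟩ := (Metric.infDist_lt_iff h).1 hlt
    set m := p • a + q • b with hm
    set d := w - m with hd
    have hnd : ‖d‖ < r := by
      rw [hd, ← dist_eq_norm']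
      exact hdw
    have haP : a + d ∈ P := by
      have : dist a (a + d) < Metric.infDist a Pᶜ := by
        rw [dist_eq_norm]
        simpa using lt_of_lt_of_le hnd hra
      have := Metric.notMem_of_dist_lt_infDist this
      simpa using this
    have hbP : b + d ∈ P := by
      have : dist b (b + d) < Metric.infDist b Pᶜ := by
        rw [dist_eq_norm]
        simpa using lt_of_lt_of_le hnd hrb
      have := Metric.notMem_of_dist_lt_infDist this
      simpa using this
    have hwP : w ∈ P := by
      have hcomb := hPc haP hbP hp hq hpq
      have h2 : p • (a + d) + q • (b + d) = (p • a + q • b) + (p + q) • d := by module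
      rw [h2, hpq, one_smul, hd, hm] at hcomb
      have h3 : p • a + q • b + (w - (p • a + q • b)) = w := by abel
      rwa [h3] at hcomb
    exact hw hwP


open Metric Set

lemma compl_nonempty {P : Set Plane} (hPb : Bornology.IsBounded P) : Pᶜ.Nonempty := by
  obtain ⟨R, hR⟩ := hPb.subset_closedBall 0
  refine ⟨vec (|R| + 1) 0, fun hx => ?_⟩
  have h0 := hR hx
  rw [Metric.mem_closedBall, dist_zero_right, norm_vec] at h0
  have h2 : Real.sqrt ((|R| + 1) ^ 2 + 0 ^ 2) = |R| + 1 := by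
    rw [show (|R| + 1) ^ 2 + 0 ^ 2 = (|R| + 1) ^ 2 by ring]
    exact Real.sqrt_sq (by positivity)
  rw [h2] at h0
  have h1 : R ≤ |R| := le_abs_self R
  linarith

/-- The level set `{infDist = 1}` inside an open bounded convex set is null. -/
lemma level_set_null {P : Set Plane} (hPo : IsOpen P) (hPc : Convex ℝ P)
    (hPb : Bornology.IsBounded P) :
    volume {z ∈ P | Metric.infDist z Pᶜ = 1} = 0 := by
  set C : Set Plane := {z ∈ P | 1 ≤ Metric.infDist z Pᶜ} with hC
  have hCc : Convex ℝ C := by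
    intro x hx y hy p q hp hq hpq
    exact ⟨hPc hx.1 hy.1 hp hq hpq,
      infDist_combo hPc hp hq hpq zero_le_one hx.2 hy.2⟩
  have hfront : volume (frontier C) = 0 := hCc.addHaar_frontier volume
  refine measure_mono_null ?_ hfront
  intro z hz
  obtain ⟨hzP, hz1⟩ := hz
  have hzC : z ∈ C := ⟨hzP, hz1.ge⟩
  constructor
  · exact subset_closure hzC
  · -- z is not in the interior of C
    intro hint
    rw [mem_interior_iff_mem_nhds, Metric.mem_nhds_iff] at hint
    obtain ⟨ε, hε, hball⟩ := hint
    obtain ⟨y, hy, hdy⟩ := hPo.isClosed_compl.exists_infDist_eq_dist (compl_nonempty hPb) z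
    rw [hz1] at hdy
    have hyz : ‖y - z‖ = 1 := by rw [← dist_eq_norm']; exact hdy.symm
    set t : ℝ := min (ε / 2) (1 / 2) with ht
    have ht0 : 0 < t := lt_min (by linarith) (by norm_num)
    have ht1 : t < 1 := lt_of_le_of_lt (min_le_right _ _) (by norm_num)
    set zt : Plane := z + t • (y - z) with hzt
    have hdzt : dist zt z = t := by
      rw [hzt, dist_eq_norm, add_sub_cancel_left, norm_smul, Real.norm_eq_abs,
        abs_of_pos ht0, hyz, mul_one]
    have hzt_ball : zt ∈ Metric.ball z ε := by
      rw [Metric.mem_ball, hdzt]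
      exact lt_of_le_of_lt (min_le_left _ _) (by linarith)
    have hzt_C : zt ∈ C := hball hzt_ball
    have hbad : Metric.infDist zt Pᶜ ≤ 1 - t := by
      have hle : Metric.infDist zt Pᶜ ≤ dist zt y := Metric.infDist_le_dist_of_mem hy
      have heq : dist zt y = 1 - t := by
        rw [hzt, dist_eq_norm]
        have h5 : z + t • (y - z) - y = -((1 - t) • (y - z)) := by module
        rw [h5, norm_neg, norm_smul, Real.norm_eq_abs, abs_of_pos (by linarith), hyz,
          mul_one]
      linarith
    have := hzt_C.2
    linarith

lemma paraOpen_bounded (u v : Plane) : Bornology.IsBounded (paraOpen u v) := by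
  refine (Metric.isBounded_closedBall (x := (0 : Plane)) (r := ‖u‖ + ‖v‖)).subset ?_
  rintro x ⟨t, s, ht0, ht1, hs0, hs1, rfl⟩
  rw [Metric.mem_closedBall, dist_zero_right]
  calc ‖t • u + s • v‖ ≤ ‖t • u‖ + ‖s • v‖ := norm_add_le _ _
    _ = t * ‖u‖ + s * ‖v‖ := by
        rw [norm_smul, norm_smul, Real.norm_eq_abs, Real.norm_eq_abs,
          abs_of_pos ht0, abs_of_pos hs0]
    _ ≤ ‖u‖ + ‖v‖ := by
        have h1 : t * ‖u‖ ≤ ‖u‖ := by nlinarith [norm_nonneg u]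
        have h2 : s * ‖v‖ ≤ ‖v‖ := by nlinarith [norm_nonneg v]
        linarith

lemma combo_mem {p q t t' : ℝ} (hp : 0 ≤ p) (hq : 0 ≤ q) (hpq : p + q = 1)
    (ht0 : 0 < t) (ht1 : t < 1) (ht0' : 0 < t') (ht1' : t' < 1) :
    0 < p * t + q * t' ∧ p * t + q * t' < 1 := by
  have e1 : 0 ≤ p * (t - min t t') := mul_nonneg hp (sub_nonneg.2 (min_le_left t t'))
  have e2 : 0 ≤ q * (t' - min t t') := mul_nonneg hq (sub_nonneg.2 (min_le_right t t'))
  have e3 : 0 ≤ p * (max t t' - t) := mul_nonneg hp (sub_nonneg.2 (le_max_left t t'))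
  have e4 : 0 ≤ q * (max t t' - t') := mul_nonneg hq (sub_nonneg.2 (le_max_right t t'))
  have e5 : p * min t t' + q * min t t' = min t t' := by rw [← add_mul, hpq, one_mul]
  have e6 : p * max t t' + q * max t t' = max t t' := by rw [← add_mul, hpq, one_mul]
  have h1 : min t t' ≤ p * t + q * t' := by nlinarith [e1, e2, e5]
  have h2 : p * t + q * t' ≤ max t t' := by nlinarith [e3, e4, e6]
  exact ⟨lt_of_lt_of_le (lt_min ht0 ht0') h1, lt_of_le_of_lt h2 (max_lt ht1 ht1')⟩

lemma paraOpen_convex (u v : Plane) : Convex ℝ (paraOpen u v) := by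
  rintro x ⟨t, s, ht0, ht1, hs0, hs1, rfl⟩ y ⟨t', s', ht0', ht1', hs0', hs1', rfl⟩
      p q hp hq hpq
  obtain ⟨h1, h2⟩ := combo_mem hp hq hpq ht0 ht1 ht0' ht1'
  obtain ⟨h3, h4⟩ := combo_mem hp hq hpq hs0 hs1 hs0' hs1'
  exact ⟨p * t + q * t', p * s + q * s', h1, h2, h3, h4, by module⟩

lemma paraOpen_isOpen {u v : Plane} (huv : LinearIndependent ℝ ![u, v]) :
    IsOpen (paraOpen u v) := by
  have hcard : Fintype.card (Fin 2) = Module.finrank ℝ Plane := by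
    simp [finrank_euclideanSpace_fin]
  set B := basisOfLinearIndependentOfCardEqFinrank huv hcard with hB
  have hBco : ⇑B = ![u, v] := coe_basisOfLinearIndependentOfCardEqFinrank huv hcard
  have hB0 : B 0 = u := by rw [hBco]; rfl
  have hB1 : B 1 = v := by rw [hBco]; rfl
  have key : paraOpen u v = (B.equivFun.symm) ''
      {w : Fin 2 → ℝ | w 0 ∈ Set.Ioo (0:ℝ) 1 ∧ w 1 ∈ Set.Ioo (0:ℝ) 1} := by
    ext x
    constructor
    · rintro ⟨t, s, ht0, ht1, hs0, hs1, rfl⟩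
      refine ⟨![t, s], ⟨⟨ht0, ht1⟩, ⟨hs0, hs1⟩⟩, ?_⟩
      rw [Module.Basis.equivFun_symm_apply, Fin.sum_univ_two, hB0, hB1]
      rfl
    · rintro ⟨w, ⟨hw0, hw1⟩, rfl⟩
      refine ⟨w 0, w 1, hw0.1, hw0.2, hw1.1, hw1.2, ?_⟩
      rw [Module.Basis.equivFun_symm_apply, Fin.sum_univ_two, hB0, hB1]
  rw [key]
  have hopen : IsOpen {w : Fin 2 → ℝ | w 0 ∈ Set.Ioo (0:ℝ) 1 ∧ w 1 ∈ Set.Ioo (0:ℝ) 1} :=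
    (isOpen_Ioo.preimage (continuous_apply 0)).inter (isOpen_Ioo.preimage (continuous_apply 1))
  exact ((B.equivFun.symm.toContinuousLinearEquiv).toHomeomorph.isOpen_image).2 hopen

lemma paraOpen_nonempty (u v : Plane) : (paraOpen u v).Nonempty :=
  ⟨(1/2 : ℝ) • u + (1/2 : ℝ) • v, (1/2 : ℝ), (1/2 : ℝ), by norm_num, by norm_num,
    by norm_num, by norm_num, rfl⟩


open Classical in
def ind (p : Prop) : ℝ := if p then 1 else 0

lemma ind_nonneg (p : Prop) : 0 ≤ ind p := by
  unfold ind; split <;> norm_num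

lemma ind_of {p : Prop} (h : p) : ind p = 1 := by simp [ind, h]

lemma ind_of_not {p : Prop} (h : ¬ p) : ind p = 0 := by simp [ind, h]

lemma ind_le_add3 {p p1 p2 p3 : Prop} (h : p → p1 ∨ p2 ∨ p3) :
    ind p ≤ ind p1 + ind p2 + ind p3 := by
  have n1 := ind_nonneg p1
  have n2 := ind_nonneg p2
  have n3 := ind_nonneg p3
  by_cases hp : p
  · rcases h hp with h1 | h2 | h3
    · rw [ind_of hp, ind_of h1]; linarith
    · rw [ind_of hp, ind_of h2]; linarith
    · rw [ind_of hp, ind_of h3]; linarith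
  · rw [ind_of_not hp]; linarith

lemma ind_le_ind {p q : Prop} (h : p → q) : ind p ≤ ind q := by
  by_cases hp : p
  · rw [ind_of hp, ind_of (h hp)]
  · rw [ind_of_not hp]; exact ind_nonneg q

/-- The measure `dθ` on `(0, 2π]`. -/
def nuT : Measure ℝ := volume.restrict (Set.Ioc 0 (2 * π))

/-- The product measure `da dθ` on `Plane × (0, 2π]`. -/
def pm : Measure (Plane × ℝ) := (volume : Measure Plane).prod nuT

instance : SigmaFinite nuT := by unfold nuT; infer_instance

lemma nuT_univ : nuT Set.univ = ENNReal.ofReal (2 * π) := by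
  rw [nuT, Measure.restrict_apply_univ, Real.volume_Ioc, sub_zero]

lemma vol_ne_top_of_bounded {s : Set Plane} (hs : Bornology.IsBounded s) :
    volume s ≠ ⊤ := by
  obtain ⟨R, hR⟩ := hs.subset_closedBall 0
  exact ne_top_of_le_ne_top measure_closedBall_lt_top.ne (measure_mono hR)

lemma integrable_ind_event {E : Set (Plane × ℝ)} (hE : MeasurableSet E) {B : Set Plane}
    (hBfin : volume B ≠ ⊤) (hsub : E ⊆ B ×ˢ Set.univ) :
    Integrable (fun q => ind (q ∈ E)) pm := by
  have h1 : (fun q : Plane × ℝ => ind (q ∈ E)) = Set.indicator E (fun _ => (1 : ℝ)) := by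
    funext q; by_cases h : q ∈ E <;> simp [ind, h]
  rw [h1, integrable_indicator_iff hE]
  refine integrableOn_const (ne_of_lt ?_)
  calc pm E ≤ pm (B ×ˢ Set.univ) := measure_mono hsub
    _ = volume B * nuT Set.univ := Measure.prod_prod _ _
    _ < ⊤ := ENNReal.mul_lt_top hBfin.lt_top (by rw [nuT_univ]; exact ENNReal.ofReal_lt_top)

/-- The iterated integral of the indicator of an event. -/
def II (E : Set (Plane × ℝ)) : ℝ := ∫ a, ∫ θ in (0:ℝ)..(2 * π), ind ((a, θ) ∈ E)

lemma two_pi_nonneg : (0 : ℝ) ≤ 2 * π := by positivity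

lemma II_eq_prod {E : Set (Plane × ℝ)} (h : Integrable (fun q => ind (q ∈ E)) pm) :
    II E = ∫ q, ind (q ∈ E) ∂pm := by
  rw [pm, MeasureTheory.integral_prod _ h, II]
  congr 1
  funext a
  rw [intervalIntegral.integral_of_le two_pi_nonneg]
  rfl

lemma prod_nonneg_int {E : Set (Plane × ℝ)} : 0 ≤ ∫ q, ind (q ∈ E) ∂pm :=
  integral_nonneg fun q => ind_nonneg _

lemma II_shift (p : Plane → ℝ → Prop) (s : ℝ) (hper : ∀ a θ, p a (θ + 2 * π) ↔ p a θ) :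
    II {q : Plane × ℝ | p q.1 (q.2 + s)} = II {q : Plane × ℝ | p q.1 q.2} := by
  unfold II
  simp only [Set.mem_setOf_eq]
  congr 1
  funext a
  have hgper : Function.Periodic (fun θ => ind (p a θ)) (2 * π) := by
    intro θ
    show ind (p a (θ + 2 * π)) = ind (p a θ)
    by_cases h : p a θ
    · rw [ind_of ((hper a θ).2 h), ind_of h]
    · rw [ind_of_not (fun hh => h ((hper a θ).1 hh)), ind_of_not h]
  calc ∫ θ in (0:ℝ)..(2 * π), ind (p a (θ + s))
      = ∫ θ in (0 + s : ℝ)..(2 * π + s), ind (p a θ) :=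
        intervalIntegral.integral_comp_add_right (fun θ => ind (p a θ)) s
    _ = ∫ θ in s..(s + 2 * π), ind (p a θ) := by rw [zero_add, add_comm (2 * π) s]
    _ = ∫ θ in (0:ℝ)..(0 + 2 * π), ind (p a θ) := hgper.intervalIntegral_add_eq s 0
    _ = ∫ θ in (0:ℝ)..(2 * π), ind (p a θ) := by rw [zero_add]

lemma prod_translate {E : Set (Plane × ℝ)}
    (hInt : Integrable (fun q => ind (q ∈ E)) pm)
    (hInt' : Integrable (fun q : Plane × ℝ => ind ((q.1 + dir q.2, q.2) ∈ E)) pm) :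
    ∫ q : Plane × ℝ, ind ((q.1 + dir q.2, q.2) ∈ E) ∂pm = ∫ q, ind (q ∈ E) ∂pm := by
  rw [pm] at *
  rw [MeasureTheory.integral_prod_symm _ hInt', MeasureTheory.integral_prod_symm _ hInt]
  congr 1
  funext θ
  exact integral_add_right_eq_self (fun a => ind ((a, θ) ∈ E)) (dir θ)

lemma II_const_fst {S : Set Plane} (hS : MeasurableSet S) :
    II {q : Plane × ℝ | q.1 ∈ S} = 2 * π * (volume S).toReal := by
  unfold II
  simp only [Set.mem_setOf_eq]
  have h1 : ∀ a : Plane, (∫ _θ in (0:ℝ)..(2 * π), ind (a ∈ S)) = (2 * π) * ind (a ∈ S) := by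
    intro a
    rw [intervalIntegral.integral_const, smul_eq_mul, sub_zero]
  rw [show (fun a : Plane => ∫ _θ in (0:ℝ)..(2 * π), ind (a ∈ S))
      = fun a : Plane => (2 * π) * ind (a ∈ S) from funext h1]
  rw [MeasureTheory.integral_const_mul]
  congr 1
  have h2 : (fun a : Plane => ind (a ∈ S)) = S.indicator 1 := by
    funext a; by_cases h : a ∈ S <;> simp [ind, h]
  rw [h2, MeasureTheory.integral_indicator_one hS, Measure.real]

lemma measurable_basemap : Measurable fun q : Plane × ℝ => q.1 + dir q.2 :=
  measurable_fst.add (continuous_dir.measurable.comp measurable_snd)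

lemma measurable_shiftmap (s : ℝ) : Measurable fun q : Plane × ℝ => q.1 + dir (q.2 + s) :=
  measurable_fst.add (continuous_dir.measurable.comp (measurable_snd.add_const s))

lemma measurable_twostep (s : ℝ) :
    Measurable fun q : Plane × ℝ => q.1 + dir q.2 + dir (q.2 + s) :=
  measurable_basemap.add (continuous_dir.measurable.comp (measurable_snd.add_const s))

lemma measurable_eq_event {c : Plane → Fin 2} (hc : Measurable c)
    {g g' : Plane × ℝ → Plane} (hg : Measurable g) (hg' : Measurable g') :
    MeasurableSet {q : Plane × ℝ | c (g q) = c (g' q)} := by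
  have heq : {q : Plane × ℝ | c (g q) = c (g' q)} =
      ⋃ i : Fin 2, ((fun q => c (g q)) ⁻¹' {i}) ∩ ((fun q => c (g' q)) ⁻¹' {i}) := by
    ext q
    simp only [Set.mem_setOf_eq, Set.mem_iUnion, Set.mem_inter_iff, Set.mem_preimage,
      Set.mem_singleton_iff]
    constructor
    · intro h; exact ⟨c (g' q), h, rfl⟩
    · rintro ⟨i, h1, h2⟩; exact h1.trans h2.symm
  rw [heq]
  exact MeasurableSet.iUnion fun i =>
    ((hc.comp hg) (measurableSet_singleton i)).inter ((hc.comp hg') (measurableSet_singleton i))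

lemma setIntegral_ind_eq {P : Set Plane} (hP : MeasurableSet P) (p : Plane → ℝ → Prop)
    [∀ a θ, Decidable (p a θ)] :
    (∫ a in P, ∫ θ in (0:ℝ)..(2 * π), (if p a θ then (1:ℝ) else 0))
      = ∫ a, ∫ θ in (0:ℝ)..(2 * π), ind (a ∈ P ∧ p a θ) := by
  rw [← MeasureTheory.integral_indicator hP]
  congr 1
  funext a
  by_cases ha : a ∈ P
  · rw [Set.indicator_of_mem ha]
    congr 1
    funext θ
    by_cases hp : p a θ
    · rw [if_pos hp, ind_of ⟨ha, hp⟩]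
    · rw [if_neg hp, ind_of_not (fun h => hp h.2)]
  · rw [Set.indicator_of_notMem ha]
    have : ∀ θ : ℝ, ind (a ∈ P ∧ p a θ) = 0 := fun θ => ind_of_not (fun h => ha h.1)
    simp only [this]
    simp

lemma pigeon (x y z : Fin 2) : x = y ∨ x = z ∨ y = z := by revert x y z; decide


theorem main {P : Set Plane} (hPo : IsOpen P) (hPc : Convex ℝ P)
    (hPb : Bornology.IsBounded P) (hPne : P.Nonempty) (c : Plane → Fin 2)
    (hc : Measurable c) :
    1 / 3 - 2 * (volume (innerBorder P 1)).toReal / (volume P).toReal ≤ ptableSet c P := by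
  classical
  have hπ : (0:ℝ) < π := Real.pi_pos
  have hPm : MeasurableSet P := hPo.measurableSet
  have hPfin : volume P ≠ ⊤ := vol_ne_top_of_bounded hPb
  set B : Set Plane := Metric.cthickening 1 P with hB
  have hBfin : volume B ≠ ⊤ := vol_ne_top_of_bounded hPb.cthickening
  have hPB : P ⊆ B := Metric.self_subset_cthickening P
  have hshiftB : ∀ x y : Plane, y ∈ P → dist x y ≤ 1 → x ∈ B := fun x y hy h =>
    Metric.mem_cthickening_of_dist_le x y 1 P hy h
  set Kb : Set Plane := {z ∈ P | Metric.infDist z Pᶜ ≤ 1} with hKb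
  have hKbm : MeasurableSet Kb := by
    have : Kb = P ∩ {z : Plane | Metric.infDist z Pᶜ ≤ 1} := rfl
    rw [this]
    exact hPm.inter ((Metric.continuous_infDist_pt (Pᶜ)).measurable measurableSet_Iic)
  have hKbP : Kb ⊆ P := fun z hz => hz.1
  have hdista : ∀ (a : Plane) (θ : ℝ), dist a (a + dir θ) = 1 := fun a θ => by
    rw [dist_comm]; exact dist_dir a θ
  -- events
  set EN : Set (Plane × ℝ) :=
    {q | q.1 ∈ P ∧ c q.1 = c (q.1 + dir q.2) ∧ q.1 + dir q.2 ∈ P} with hENdef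
  set E2 : Set (Plane × ℝ) :=
    {q | q.1 ∈ P ∧ c q.1 = c (q.1 + dir (q.2 + π / 3)) ∧ q.1 + dir (q.2 + π / 3) ∈ P}
    with hE2def
  set E3' : Set (Plane × ℝ) :=
    {q | q.1 ∈ P ∧ c q.1 = c (q.1 + dir (q.2 + 2 * π / 3)) ∧
      q.1 + dir (q.2 + 2 * π / 3) ∈ P} with hE3'def
  set E3 : Set (Plane × ℝ) :=
    {q | q.1 + dir q.2 ∈ P ∧ c (q.1 + dir q.2) = c (q.1 + dir q.2 + dir (q.2 + 2 * π / 3)) ∧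
      q.1 + dir q.2 + dir (q.2 + 2 * π / 3) ∈ P} with hE3def
  set ET : Set (Plane × ℝ) :=
    {q | q.1 ∈ P ∧ q.1 + dir q.2 ∈ P ∧ q.1 + dir (q.2 + π / 3) ∈ P} with hETdef
  set ED : Set (Plane × ℝ) := {q | q.1 ∈ P ∧ q.1 + dir q.2 ∈ P} with hEDdef
  set EKa : Set (Plane × ℝ) := {q | q.1 ∈ Kb} with hEKadef
  set EKb : Set (Plane × ℝ) := {q | q.1 + dir q.2 ∈ Kb} with hEKbdef
  set EL : Set (Plane × ℝ) := {q | q.1 ∈ P \ Kb} with hELdef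
  -- measurability
  have hENm : MeasurableSet EN :=
    (measurable_fst hPm).inter
      ((measurable_eq_event hc measurable_fst measurable_basemap).inter (measurable_basemap hPm))
  have hE2m : MeasurableSet E2 :=
    (measurable_fst hPm).inter
      ((measurable_eq_event hc measurable_fst (measurable_shiftmap (π / 3))).inter
        ((measurable_shiftmap (π / 3)) hPm))
  have hE3'm : MeasurableSet E3' :=
    (measurable_fst hPm).inter
      ((measurable_eq_event hc measurable_fst (measurable_shiftmap (2 * π / 3))).inter
        ((measurable_shiftmap (2 * π / 3)) hPm))
  have hE3m : MeasurableSet E3 :=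
    (measurable_basemap hPm).inter
      ((measurable_eq_event hc measurable_basemap (measurable_twostep (2 * π / 3))).inter
        ((measurable_twostep (2 * π / 3)) hPm))
  have hETm : MeasurableSet ET :=
    (measurable_fst hPm).inter
      ((measurable_basemap hPm).inter ((measurable_shiftmap (π / 3)) hPm))
  have hEDm : MeasurableSet ED := (measurable_fst hPm).inter (measurable_basemap hPm)
  have hEKam : MeasurableSet EKa := measurable_fst hKbm
  have hEKbm : MeasurableSet EKb := measurable_basemap hKbm
  have hELm : MeasurableSet EL := measurable_fst (hPm.diff hKbm)
  -- integrability
  have hIEN : Integrable (fun q => ind (q ∈ EN)) pm :=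
    integrable_ind_event hENm hBfin (fun q hq => Set.mem_prod.2 ⟨hPB hq.1, trivial⟩)
  have hIE2 : Integrable (fun q => ind (q ∈ E2)) pm :=
    integrable_ind_event hE2m hBfin (fun q hq => Set.mem_prod.2 ⟨hPB hq.1, trivial⟩)
  have hIE3' : Integrable (fun q => ind (q ∈ E3')) pm :=
    integrable_ind_event hE3'm hBfin (fun q hq => Set.mem_prod.2 ⟨hPB hq.1, trivial⟩)
  have hIE3 : Integrable (fun q => ind (q ∈ E3)) pm :=
    integrable_ind_event hE3m hBfin (fun q hq => Set.mem_prod.2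
      ⟨hshiftB q.1 (q.1 + dir q.2) hq.1 (hdista q.1 q.2).le, trivial⟩)
  have hIET : Integrable (fun q => ind (q ∈ ET)) pm :=
    integrable_ind_event hETm hBfin (fun q hq => Set.mem_prod.2 ⟨hPB hq.1, trivial⟩)
  have hIED : Integrable (fun q => ind (q ∈ ED)) pm :=
    integrable_ind_event hEDm hBfin (fun q hq => Set.mem_prod.2 ⟨hPB hq.1, trivial⟩)
  have hIEKa : Integrable (fun q => ind (q ∈ EKa)) pm :=
    integrable_ind_event hEKam hBfin (fun q hq => Set.mem_prod.2 ⟨hPB (hKbP hq), trivial⟩)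
  have hIEKb : Integrable (fun q => ind (q ∈ EKb)) pm :=
    integrable_ind_event hEKbm hBfin (fun q hq => Set.mem_prod.2
      ⟨hshiftB q.1 (q.1 + dir q.2) (hKbP hq) (hdista q.1 q.2).le, trivial⟩)
  have hIEL : Integrable (fun q => ind (q ∈ EL)) pm :=
    integrable_ind_event hELm hBfin (fun q hq => Set.mem_prod.2 ⟨hPB hq.1, trivial⟩)
  -- the real quantities
  set N : ℝ := ∫ q, ind (q ∈ EN) ∂pm with hNdef
  set D : ℝ := ∫ q, ind (q ∈ ED) ∂pm with hDdef
  set T : ℝ := ∫ q, ind (q ∈ ET) ∂pm with hTdef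
  -- θ-shifts
  have hperN : ∀ (a : Plane) (θ : ℝ),
      (a ∈ P ∧ c a = c (a + dir (θ + 2 * π)) ∧ a + dir (θ + 2 * π) ∈ P) ↔
      (a ∈ P ∧ c a = c (a + dir θ) ∧ a + dir θ ∈ P) := by
    intro a θ
    rw [show dir (θ + 2 * π) = dir θ from periodic_dir θ]
  have hshift2 : (∫ q, ind (q ∈ E2) ∂pm) = N := by
    rw [← II_eq_prod hIE2, hNdef, ← II_eq_prod hIEN]
    exact II_shift (fun a θ => a ∈ P ∧ c a = c (a + dir θ) ∧ a + dir θ ∈ P) (π / 3) hperN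
  have hshift3 : (∫ q, ind (q ∈ E3') ∂pm) = N := by
    rw [← II_eq_prod hIE3', hNdef, ← II_eq_prod hIEN]
    exact II_shift (fun a θ => a ∈ P ∧ c a = c (a + dir θ) ∧ a + dir θ ∈ P) (2 * π / 3) hperN
  have htrans3 : (∫ q, ind (q ∈ E3) ∂pm) = ∫ q, ind (q ∈ E3') ∂pm :=
    prod_translate hIE3' hIE3
  -- pigeonhole: ET ⊆ EN ∪ E2 ∪ E3
  have hpigeonT : ∀ q : Plane × ℝ, q ∈ ET → q ∈ EN ∨ q ∈ E2 ∨ q ∈ E3 := by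
    rintro ⟨a, θ⟩ ⟨ha, hb, hw⟩
    have hw' : a + dir θ + dir (θ + 2 * π / 3) = a + dir (θ + π / 3) := by
      rw [add_assoc, dir_add_dir]
    rcases pigeon (c a) (c (a + dir θ)) (c (a + dir (θ + π / 3))) with h | h | h
    · exact Or.inl ⟨ha, h, hb⟩
    · exact Or.inr (Or.inl ⟨ha, h, hw⟩)
    · refine Or.inr (Or.inr ⟨hb, ?_, ?_⟩)
      · rw [hw']; exact h
      · rw [hw']; exact hw
  have hTle : T ≤ 3 * N := by
    have h1 : T ≤ (∫ q, ind (q ∈ EN) ∂pm) + (∫ q, ind (q ∈ E2) ∂pm)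
        + ∫ q, ind (q ∈ E3) ∂pm := by
      calc T ≤ ∫ q, (ind (q ∈ EN) + ind (q ∈ E2) + ind (q ∈ E3)) ∂pm := by
            refine integral_mono hIET ((hIEN.add hIE2).add hIE3) ?_
            intro q
            exact ind_le_add3 (hpigeonT q)
        _ = _ := by
            have h12 : Integrable (fun q => ind (q ∈ EN) + ind (q ∈ E2)) pm := hIEN.add hIE2
            rw [MeasureTheory.integral_add h12 hIE3, MeasureTheory.integral_add hIEN hIE2]
    rw [hshift2, htrans3, hshift3] at h1
    linarith
  -- geometry: ED ⊆ ET ∪ EKa ∪ EKb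
  have hgeo : ∀ q : Plane × ℝ, q ∈ ED → q ∈ ET ∨ q ∈ EKa ∨ q ∈ EKb := by
    rintro ⟨a, θ⟩ ⟨ha, hb⟩
    by_cases hka : a ∈ Kb
    · exact Or.inr (Or.inl hka)
    by_cases hkb : a + dir θ ∈ Kb
    · exact Or.inr (Or.inr hkb)
    left
    have h1 : 1 ≤ Metric.infDist a Pᶜ := by
      by_contra h
      push_neg at h
      exact hka ⟨ha, h.le⟩
    have h2 : 1 ≤ Metric.infDist (a + dir θ) Pᶜ := by
      by_contra h
      push_neg at h
      exact hkb ⟨hb, h.le⟩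
    have hm := infDist_combo hPc (by norm_num : (0:ℝ) ≤ 1/2) (by norm_num : (0:ℝ) ≤ 1/2)
      (by norm_num : (1/2 : ℝ) + 1/2 = 1) zero_le_one h1 h2
    have hmeq : (1/2 : ℝ) • a + (1/2 : ℝ) • (a + dir θ) = a + (1/2 : ℝ) • dir θ := by
      module
    rw [hmeq] at hm
    refine ⟨ha, hb, ?_⟩
    by_contra hw
    have hle := Metric.infDist_le_dist_of_mem (x := a + (1/2 : ℝ) • dir θ)
      (show a + dir (θ + π / 3) ∈ Pᶜ from hw)
    have hd := dist_third_vertex a θ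
    rw [dist_comm] at hd
    linarith
  have hDle : D ≤ T + (∫ q, ind (q ∈ EKa) ∂pm) + ∫ q, ind (q ∈ EKb) ∂pm := by
    calc D ≤ ∫ q, (ind (q ∈ ET) + ind (q ∈ EKa) + ind (q ∈ EKb)) ∂pm := by
          refine integral_mono hIED ((hIET.add hIEKa).add hIEKb) ?_
          intro q
          exact ind_le_add3 (hgeo q)
      _ = _ := by
            have h12 : Integrable (fun q => ind (q ∈ ET) + ind (q ∈ EKa)) pm := hIET.add hIEKa
            rw [MeasureTheory.integral_add h12 hIEKb, MeasureTheory.integral_add hIET hIEKa]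
  have hKaval : (∫ q, ind (q ∈ EKa) ∂pm) = 2 * π * (volume Kb).toReal := by
    rw [← II_eq_prod hIEKa]
    exact II_const_fst hKbm
  have hKbval : (∫ q, ind (q ∈ EKb) ∂pm) = 2 * π * (volume Kb).toReal := by
    have ht : (∫ q, ind (q ∈ EKb) ∂pm) = ∫ q, ind (q ∈ EKa) ∂pm :=
      prod_translate hIEKa hIEKb
    rw [ht, ← II_eq_prod hIEKa]
    exact II_const_fst hKbm
  -- lower bound for D
  have hgeoL : ∀ q : Plane × ℝ, q ∈ EL → q ∈ ED := by
    rintro ⟨a, θ⟩ ⟨ha, hka⟩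
    have h1 : 1 < Metric.infDist a Pᶜ := by
      by_contra h
      push_neg at h
      exact hka ⟨ha, h⟩
    refine ⟨ha, ?_⟩
    have h2 : dist a (a + dir θ) < Metric.infDist a Pᶜ := by
      rw [hdista]; exact h1
    have := Metric.notMem_of_dist_lt_infDist h2
    simpa using this
  have hLle : (∫ q, ind (q ∈ EL) ∂pm) ≤ D := by
    refine integral_mono hIEL hIED ?_
    intro q
    exact ind_le_ind (hgeoL q)
  have hLval : (∫ q, ind (q ∈ EL) ∂pm) = 2 * π * (volume (P \ Kb)).toReal := by
    rw [← II_eq_prod hIEL]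
    exact II_const_fst (hPm.diff hKbm)
  -- numeric abbreviations
  set A : ℝ := (volume P).toReal with hAdef
  set κ : ℝ := (volume Kb).toReal with hκdef
  have hA0 : 0 < A := ENNReal.toReal_pos (hPo.measure_pos volume hPne).ne' hPfin
  have hκ0 : 0 ≤ κ := ENNReal.toReal_nonneg
  have hKbfin : volume Kb ≠ ⊤ := ne_top_of_le_ne_top hPfin (measure_mono hKbP)
  have hκA : κ ≤ A := ENNReal.toReal_mono hPfin (measure_mono hKbP)
  have hdiffv : (volume (P \ Kb)).toReal = A - κ := by
    rw [measure_diff hKbP hKbm.nullMeasurableSet hKbfin,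
      ENNReal.toReal_sub_of_le (measure_mono hKbP) hPfin]
  have hDlow : 2 * π * (A - κ) ≤ D := by
    rw [← hdiffv, ← hLval]
    exact hLle
  have hchain : D ≤ 3 * N + 4 * π * κ := by
    have := hDle
    rw [hKaval, hKbval] at this
    linarith
  -- identify the volume of the inner border with κ
  have hKvol : (volume (innerBorder P 1)).toReal = κ := by
    have h1 : volume (innerBorder P 1) ≤ volume Kb :=
      measure_mono (fun z hz => ⟨hz.1, hz.2.le⟩)
    have hsplit : Kb ⊆ innerBorder P 1 ∪ {z ∈ P | Metric.infDist z Pᶜ = 1} := by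
      intro z hz
      rcases lt_or_eq_of_le hz.2 with h | h
      · exact Or.inl ⟨hz.1, h⟩
      · exact Or.inr ⟨hz.1, h⟩
    have h2 : volume Kb ≤ volume (innerBorder P 1) := by
      calc volume Kb ≤ volume (innerBorder P 1 ∪ {z ∈ P | Metric.infDist z Pᶜ = 1}) :=
            measure_mono hsplit
        _ ≤ volume (innerBorder P 1) + volume {z ∈ P | Metric.infDist z Pᶜ = 1} :=
            measure_union_le _ _
        _ = volume (innerBorder P 1) := by rw [level_set_null hPo hPc hPb, add_zero]
    rw [hκdef, le_antisymm h1 h2]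
  -- identify ptableSet with N / D
  have hnum : (∫ a in P, ∫ θ in (0:ℝ)..(2 * π),
      (if c a = c (a + dir θ) ∧ a + dir θ ∈ P then (1:ℝ) else 0)) = N := by
    have step1 := setIntegral_ind_eq hPm (fun a θ => c a = c (a + dir θ) ∧ a + dir θ ∈ P)
    have step2 : (∫ a, ∫ θ in (0:ℝ)..(2 * π),
        ind (a ∈ P ∧ (c a = c (a + dir θ) ∧ a + dir θ ∈ P))) = N := II_eq_prod hIEN
    exact step1.trans step2
  have hden : (∫ a in P, ∫ θ in (0:ℝ)..(2 * π),
      (if a + dir θ ∈ P then (1:ℝ) else 0)) = D := by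
    have step1 := setIntegral_ind_eq hPm (fun a θ => a + dir θ ∈ P)
    have step2 : (∫ a, ∫ θ in (0:ℝ)..(2 * π), ind (a ∈ P ∧ a + dir θ ∈ P)) = D :=
      II_eq_prod hIED
    exact step1.trans step2
  have hptable : ptableSet c P = N / D := by
    rw [ptableSet, hnum, hden]
  rw [hptable, hKvol]
  have hN0 : 0 ≤ N := prod_nonneg_int
  have hD0 : 0 ≤ D := prod_nonneg_int
  by_cases hcase : A ≤ 6 * κ
  · have h1 : 1 / 3 ≤ 2 * κ / A := by
      rw [le_div_iff₀ hA0]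
      linarith
    have h2 : 0 ≤ N / D := div_nonneg hN0 hD0
    linarith
  · push_neg at hcase
    have hκA' : κ < A := by linarith
    have hDpos : 0 < D :=
      lt_of_lt_of_le (mul_pos (by positivity) (by linarith)) hDlow
    rw [show (1:ℝ) / 3 - 2 * κ / A = (A - 6 * κ) / (3 * A) by field_simp; ring]
    rw [div_le_div_iff₀ (by positivity) hDpos]
    have hq1 : κ * (2 * π * (A - κ)) ≤ κ * D := mul_le_mul_of_nonneg_left hDlow hκ0
    have hq2 : 0 ≤ π * κ * (A - 6 * κ) :=
      mul_nonneg (mul_nonneg hπ.le hκ0) (by linarith)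
    have hq3 : 0 ≤ π * κ * κ := mul_nonneg (mul_nonneg hπ.le hκ0) hκ0
    have hq4 : A * (D - 4 * π * κ) ≤ A * (3 * N) :=
      mul_le_mul_of_nonneg_left (by linarith) hA0.le
    nlinarith [hq1, hq2, hq3, hq4]

end St16

/-- With two colors on a finite table: `p^table(c) ≥ 1/3 − 2·Area(K(P,1))/Area(P)` for
any measurable 2-coloring `c` of an open parallelogram `P` containing a unit segment. -/
theorem stmt16 (u v : Plane) (huv : LinearIndependent ℝ ![u, v])
    (hseg : ∃ a b : Plane, a ∈ paraOpen u v ∧ b ∈ paraOpen u v ∧ dist a b = 1)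
    (c : Plane → Fin 2) (hc : Measurable c) :
    1 / 3 - 2 * (volume (innerBorder (paraOpen u v) 1)).toReal /
        (volume (paraOpen u v)).toReal ≤ ptableSet c (paraOpen u v) :=
  St16.main (St16.paraOpen_isOpen huv) (St16.paraOpen_convex u v)
    (St16.paraOpen_bounded u v) (St16.paraOpen_nonempty u v) c hc

end
end
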